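/- Let F be holomorphic on the open unit disk 𝔻 with non-constant derivative F′, and let g : [0,1] → ℝ be measurable with 0 < ∫_𝔻 g(|z|)² dA(z) < ∞. Then the strict inequality |F′(0)|² · ∫_𝔻 g(|z|)² dA(z) < ∫_𝔻 g(|z|)² |F′(z)|² dA(z) holds (where the right-hand side may be +∞). -/

import Mathlib

open MeasureTheory Metric Set

section Aux
open Real intervalIntegral


private lemma exp_int_circle_integral {c : ℂ} (hc : c ≠ 0) (hc2 : Complex.exp (c * π) = Complex.exp (c * (-π:ℝ))) :
    (∫ θ in (-π:ℝ)..π, Complex.exp (c * θ)) = 0 := by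
  rw [integral_exp_mul_complex hc, hc2]; simp

private lemma exp_k_eq (k : ℕ) : Complex.exp (((k:ℂ) * Complex.I) * π) = Complex.exp (((k:ℂ)*Complex.I) * (-π:ℝ)) := by
  rw [show ((k:ℂ)*Complex.I) * π = ((k:ℂ)*Complex.I) * (-π:ℝ) + (k:ℤ) * (2 * π * Complex.I) by push_cast; ring,
    Complex.exp_add, Complex.exp_int_mul_two_pi_mul_I, mul_one]

private lemma integral_exp_k (k : ℕ) (hk : k ≠ 0) :
    (∫ θ in (-π:ℝ)..π, Complex.exp ((k:ℂ) * θ * Complex.I)) = 0 := by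
  have h : ∀ θ : ℝ, (k:ℂ) * θ * Complex.I = ((k:ℂ) * Complex.I) * θ := fun θ => by ring
  simp_rw [h]
  exact exp_int_circle_integral (by simp [hk, Complex.I_ne_zero]) (exp_k_eq k)

private lemma integral_exp_neg_k (k : ℕ) (hk : k ≠ 0) :
    (∫ θ in (-π:ℝ)..π, Complex.exp (-(k:ℂ) * θ * Complex.I)) = 0 := by
  have h : ∀ θ : ℝ, -(k:ℂ) * θ * Complex.I = (-((k:ℂ) * Complex.I)) * θ := fun θ => by ring
  simp_rw [h]
  apply exp_int_circle_integral (by simp [hk, Complex.I_ne_zero])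
  rw [show (-((k:ℂ)*Complex.I)) * (π:ℂ) = -(((k:ℂ)*Complex.I) * π) by ring,
    show (-((k:ℂ)*Complex.I)) * ((-π:ℝ):ℂ) = -(((k:ℂ)*Complex.I) * ((-π:ℝ):ℂ)) by push_cast; ring,
    Complex.exp_neg, Complex.exp_neg, exp_k_eq k]



private lemma bessel_two (u : ℝ → ℂ) (hu : Continuous u) (k : ℕ) (hk : k ≠ 0) (c₀ ck : ℂ)
    (h₀ : (∫ θ in (-π:ℝ)..π, u θ) = (2*π) * c₀)
    (hck : (∫ θ in (-π:ℝ)..π, Complex.exp (-(k:ℂ) * θ * Complex.I) * u θ) = (2*π) * ck) :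
    2*π*(‖c₀‖^2 + ‖ck‖^2) ≤ ∫ θ in (-π:ℝ)..π, ‖u θ‖^2 := by
  classical
  set E : ℝ → ℂ := fun θ => Complex.exp ((k:ℂ) * θ * Complex.I) with hE
  have hEcont : Continuous E := by
    apply Complex.continuous_exp.comp
    exact ((continuous_const.mul Complex.continuous_ofReal).mul continuous_const)
  have hE'cont : Continuous (fun θ : ℝ => Complex.exp (-(k:ℂ) * θ * Complex.I)) := by
    apply Complex.continuous_exp.comp
    exact ((continuous_const.mul Complex.continuous_ofReal).mul continuous_const)
  have hEabs : ∀ θ : ℝ, ‖E θ‖ = 1 := by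
    intro θ; rw [hE]; simp [Complex.norm_exp]
  have hEconj : ∀ θ : ℝ, (starRingEnd ℂ) (E θ) = Complex.exp (-(k:ℂ) * θ * Complex.I) := by
    intro θ
    rw [hE, ← Complex.exp_conj]
    congr 1
    simp only [map_mul, Complex.conj_I, Complex.conj_ofReal, map_natCast]
    ring
  set v : ℝ → ℂ := fun θ => c₀ + ck * E θ with hv
  have hvcont : Continuous v := continuous_const.add (continuous_const.mul hEcont)
  have expand : ∀ θ : ℝ, ‖u θ - v θ‖^2
      = ‖u θ‖^2 - 2 * (u θ * (starRingEnd ℂ) (v θ)).re + ‖v θ‖^2 := by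
    intro θ
    simp only [Complex.sq_norm]
    rw [Complex.normSq_sub]
    ring
  have hu2 : IntervalIntegrable (fun θ => ‖u θ‖^2) volume (-π:ℝ) π :=
    ((continuous_norm.comp hu).pow 2).intervalIntegrable _ _
  have hcrossc : Continuous (fun θ => u θ * (starRingEnd ℂ) (v θ)) :=
    hu.mul (Complex.continuous_conj.comp hvcont)
  have hcross : IntervalIntegrable (fun θ => (u θ * (starRingEnd ℂ) (v θ)).re) volume (-π:ℝ) π :=
    (Complex.continuous_re.comp hcrossc).intervalIntegrable _ _
  have hv2 : IntervalIntegrable (fun θ => ‖v θ‖^2) volume (-π:ℝ) π :=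
    ((continuous_norm.comp hvcont).pow 2).intervalIntegrable _ _
  have cross_val : (∫ θ in (-π:ℝ)..π, (u θ * (starRingEnd ℂ) (v θ)).re)
      = 2*π*(‖c₀‖^2 + ‖ck‖^2) := by
    have hcc : IntervalIntegrable (fun θ => u θ * (starRingEnd ℂ) (v θ)) volume (-π:ℝ) π :=
      hcrossc.intervalIntegrable _ _
    have hre : (∫ θ in (-π:ℝ)..π, (u θ * (starRingEnd ℂ) (v θ)).re)
        = (∫ θ in (-π:ℝ)..π, u θ * (starRingEnd ℂ) (v θ)).re := by
      have h := Complex.reCLM.intervalIntegral_comp_comm hcc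
      simp only [Complex.reCLM_apply] at h
      exact h
    rw [hre]
    have hsplit : (∫ θ in (-π:ℝ)..π, u θ * (starRingEnd ℂ) (v θ))
        = (starRingEnd ℂ) c₀ * (∫ θ in (-π:ℝ)..π, u θ)
          + (starRingEnd ℂ) ck * (∫ θ in (-π:ℝ)..π, Complex.exp (-(k:ℂ) * θ * Complex.I) * u θ) := by
      have step1 : (∫ θ in (-π:ℝ)..π, u θ * (starRingEnd ℂ) (v θ))
          = ∫ θ in (-π:ℝ)..π, ((starRingEnd ℂ) c₀ * u θ
              + (starRingEnd ℂ) ck * (Complex.exp (-(k:ℂ) * θ * Complex.I) * u θ)) := by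
        apply intervalIntegral.integral_congr
        intro θ _
        simp only [hv, map_add, map_mul, hEconj θ]
        ring
      rw [step1, intervalIntegral.integral_add (f := fun θ => (starRingEnd ℂ) c₀ * u θ)
        (g := fun θ => (starRingEnd ℂ) ck * (Complex.exp (-(k:ℂ) * θ * Complex.I) * u θ))
        ((continuous_const.mul hu).intervalIntegrable _ _)
        ((continuous_const.mul (hE'cont.mul hu)).intervalIntegrable _ _),
        intervalIntegral.integral_const_mul, intervalIntegral.integral_const_mul]
    rw [hsplit, h₀, hck]
    have h1 : (starRingEnd ℂ) c₀ * (2*(π:ℂ) * c₀) + (starRingEnd ℂ) ck * (2*(π:ℂ) * ck)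
        = ((2*π*(‖c₀‖^2 + ‖ck‖^2) : ℝ) : ℂ) := by
      rw [show (starRingEnd ℂ) c₀ * (2*(π:ℂ) * c₀) = 2*(π:ℂ) * (c₀ * (starRingEnd ℂ) c₀) by ring,
          show (starRingEnd ℂ) ck * (2*(π:ℂ) * ck) = 2*(π:ℂ) * (ck * (starRingEnd ℂ) ck) by ring,
          Complex.mul_conj, Complex.mul_conj, ← Complex.sq_norm c₀, ← Complex.sq_norm ck]
      push_cast
      ring
    rw [h1, Complex.ofReal_re]
  have v2_val : (∫ θ in (-π:ℝ)..π, ‖v θ‖^2)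
      = 2*π*(‖c₀‖^2 + ‖ck‖^2) := by
    have hvexp : ∀ θ : ℝ, ‖v θ‖^2
        = (‖c₀‖^2 + ‖ck‖^2)
          + 2 * ((c₀ * (starRingEnd ℂ) ck) * Complex.exp (-(k:ℂ) * θ * Complex.I)).re := by
      intro θ
      simp only [Complex.sq_norm, hv]
      rw [Complex.normSq_add]
      have hns : Complex.normSq (ck * E θ) = Complex.normSq ck := by
        rw [Complex.normSq_mul]
        have h2 : Complex.normSq (E θ) = 1 := by
          rw [← Complex.sq_norm, hEabs θ]; norm_num
        rw [h2, mul_one]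
      rw [hns, map_mul, hEconj θ]
      ring_nf
    have hconte : Continuous (fun θ : ℝ =>
        2 * ((c₀ * (starRingEnd ℂ) ck) * Complex.exp (-(k:ℂ) * θ * Complex.I)).re) :=
      continuous_const.mul (Complex.continuous_re.comp (continuous_const.mul hE'cont))
    have : (∫ θ in (-π:ℝ)..π, ‖v θ‖^2)
        = ∫ θ in (-π:ℝ)..π, ((‖c₀‖^2 + ‖ck‖^2)
          + 2 * ((c₀ * (starRingEnd ℂ) ck) * Complex.exp (-(k:ℂ) * θ * Complex.I)).re) := by
      apply intervalIntegral.integral_congr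
      intro θ _; exact hvexp θ
    rw [this, intervalIntegral.integral_add intervalIntegrable_const
      (hconte.intervalIntegrable _ _), intervalIntegral.integral_const]
    have hzero : (∫ θ in (-π:ℝ)..π,
        2 * ((c₀ * (starRingEnd ℂ) ck) * Complex.exp (-(k:ℂ) * θ * Complex.I)).re) = 0 := by
      rw [intervalIntegral.integral_const_mul]
      have hcc : IntervalIntegrable
          (fun θ : ℝ => (c₀ * (starRingEnd ℂ) ck) * Complex.exp (-(k:ℂ) * θ * Complex.I))
          volume (-π:ℝ) π := (continuous_const.mul hE'cont).intervalIntegrable _ _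
      have hre := Complex.reCLM.intervalIntegral_comp_comm hcc
      simp only [Complex.reCLM_apply] at hre
      rw [hre, intervalIntegral.integral_const_mul, integral_exp_neg_k k hk]
      simp
    rw [hzero, add_zero, smul_eq_mul]
    ring
  have hnn : 0 ≤ ∫ θ in (-π:ℝ)..π, ‖u θ - v θ‖^2 := by
    apply intervalIntegral.integral_nonneg (by linarith [Real.pi_pos])
    intro θ _; positivity
  have key : (∫ θ in (-π:ℝ)..π, ‖u θ - v θ‖^2)
      = (∫ θ in (-π:ℝ)..π, ‖u θ‖^2) - 2*π*(‖c₀‖^2 + ‖ck‖^2) := by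
    calc (∫ θ in (-π:ℝ)..π, ‖u θ - v θ‖^2)
        = ∫ θ in (-π:ℝ)..π, (‖u θ‖^2
            - 2 * (u θ * (starRingEnd ℂ) (v θ)).re + ‖v θ‖^2) := by
          apply intervalIntegral.integral_congr
          intro θ _; exact expand θ
      _ = (∫ θ in (-π:ℝ)..π, ‖u θ‖^2)
            - 2 * (∫ θ in (-π:ℝ)..π, (u θ * (starRingEnd ℂ) (v θ)).re)
            + (∫ θ in (-π:ℝ)..π, ‖v θ‖^2) := by
          rw [intervalIntegral.integral_add (hu2.sub (hcross.const_mul 2)) hv2,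
            intervalIntegral.integral_sub hu2 (hcross.const_mul 2),
            intervalIntegral.integral_const_mul]
      _ = _ := by rw [cross_val, v2_val]; ring
  linarith [hnn, key]


private lemma coeff_integral (f : ℂ → ℂ) (hf : DifferentiableOn ℂ f (ball (0:ℂ) 1))
    {r : ℝ} (hr0 : 0 < r) (hr1 : r < 1) (n : ℕ)
    (p : FormalMultilinearSeries ℂ ℂ ℂ) (hp : HasFPowerSeriesAt f p 0) :
    (∫ θ in (-π:ℝ)..π, Complex.exp (-(n:ℂ) * θ * Complex.I) * f (circleMap 0 r θ))
      = (2*π) * (p.coeff n * (r:ℂ)^n) := by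
  -- p equals the Cauchy power series at radius r
  have hrr : ((r.toNNReal : ℝ)) = r := Real.coe_toNNReal r hr0.le
  have hball : closedBall (0:ℂ) (r.toNNReal : ℝ) ⊆ ball (0:ℂ) 1 := by
    rw [hrr]; exact closedBall_subset_ball hr1
  have hq : HasFPowerSeriesOnBall f (cauchyPowerSeries f 0 r) 0 (r.toNNReal : ENNReal) := by
    have := (hf.mono hball).hasFPowerSeriesOnBall (Real.toNNReal_pos.mpr hr0)
    rwa [hrr] at this
  have hpq : p = cauchyPowerSeries f 0 r :=
    hp.eq_formalMultilinearSeries hq.hasFPowerSeriesAt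
  -- compute the coefficient as a circle integral
  have hcoeff : (cauchyPowerSeries f 0 r).coeff n
      = (2 * π * Complex.I : ℂ)⁻¹ • ∮ z in C(0, r), (1 / (z - 0)) ^ n • (z - 0)⁻¹ • f z := by
    exact cauchyPowerSeries_apply f 0 r n 1
  -- unfold the circle integral
  have hunfold : (∮ z in C(0, r), (1 / (z - 0)) ^ n • (z - 0)⁻¹ • f z)
      = ∫ θ in (0:ℝ)..2*π, Complex.I * ((r:ℂ)^n)⁻¹
          * (Complex.exp (-(n:ℂ) * θ * Complex.I) * f (circleMap 0 r θ)) := by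
    rw [circleIntegral]
    apply intervalIntegral.integral_congr
    intro θ _
    dsimp only
    have hz : circleMap 0 r θ = (r:ℂ) * Complex.exp (θ * Complex.I) := circleMap_zero r θ
    have hzne : circleMap 0 r θ ≠ 0 := by
      exact circleMap_ne_center (R := r) (c := 0) (ne_of_gt hr0) (θ := θ)
    have hrne : (r:ℂ) ≠ 0 := by exact_mod_cast hr0.ne'
    have hexpne : Complex.exp (θ * Complex.I) ≠ 0 := Complex.exp_ne_zero _
    rw [deriv_circleMap]
    simp only [smul_eq_mul, sub_zero]
    rw [hz]
    rw [show (circleMap 0 r θ) = (r:ℂ) * Complex.exp (θ * Complex.I) from hz] at hzne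
    have hpow : ((r:ℂ) * Complex.exp (θ * Complex.I))^n
        = (r:ℂ)^n * Complex.exp ((n:ℂ) * (θ * Complex.I)) := by
      rw [mul_pow, ← Complex.exp_nat_mul]
    have hexp_neg : Complex.exp (-(n:ℂ) * θ * Complex.I)
        = (Complex.exp ((n:ℂ) * (θ * Complex.I)))⁻¹ := by
      rw [← Complex.exp_neg]; congr 1; ring
    field_simp [hpow, hexp_neg]
    rw [one_div, inv_pow, hpow, show -(↑θ * Complex.I * (n:ℂ)) = -((n:ℂ) * (↑θ * Complex.I)) by ring,
      Complex.exp_neg, mul_inv]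
    field_simp
  -- put it together
  have key : (∫ θ in (0:ℝ)..2*π, Complex.exp (-(n:ℂ) * θ * Complex.I) * f (circleMap 0 r θ))
      = (2*π) * ((cauchyPowerSeries f 0 r).coeff n * (r:ℂ)^n) := by
    have hrne : ((r:ℂ)^n) ≠ 0 := pow_ne_zero _ (by exact_mod_cast hr0.ne')
    have hIne : (2 * (π:ℂ) * Complex.I) ≠ 0 := by
      simp [Real.pi_ne_zero, Complex.I_ne_zero, Complex.ofReal_ne_zero]
    rw [hcoeff, hunfold, intervalIntegral.integral_const_mul, smul_eq_mul]
    field_simp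
    apply intervalIntegral.integral_congr
    intro x _
    dsimp only
    ring_nf
  -- shift the interval using periodicity
  have hper : Function.Periodic
      (fun θ : ℝ => Complex.exp (-(n:ℂ) * θ * Complex.I) * f (circleMap 0 r θ)) (2*π) := by
    intro θ
    have h1 : circleMap 0 r (θ + 2*π) = circleMap 0 r θ := periodic_circleMap 0 r θ
    have h2 : Complex.exp (-(n:ℂ) * ((θ + 2*π : ℝ) : ℂ) * Complex.I)
        = Complex.exp (-(n:ℂ) * θ * Complex.I) := by
      rw [show (-(n:ℂ) * ((θ + 2*π : ℝ) : ℂ) * Complex.I)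
          = -(n:ℂ) * θ * Complex.I + ((-(n:ℤ) : ℤ) : ℂ) * (2 * π * Complex.I) by push_cast; ring,
        Complex.exp_add, Complex.exp_int_mul_two_pi_mul_I, mul_one]
    simp only [h1, h2]
  have hshift : (∫ θ in (-π:ℝ)..π, Complex.exp (-(n:ℂ) * θ * Complex.I) * f (circleMap 0 r θ))
      = ∫ θ in (0:ℝ)..2*π, Complex.exp (-(n:ℂ) * θ * Complex.I) * f (circleMap 0 r θ) := by
    have := hper.intervalIntegral_add_eq (-π) 0
    rw [show (-π + 2*π) = π by ring] at this
    rw [this, zero_add]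
  rw [hshift, key, ← hpq]


private lemma lintegral_polarCoord_symm (φ : ℝ × ℝ → ENNReal) (hφ : Measurable φ) :
    (∫⁻ p in polarCoord.target, ENNReal.ofReal p.1 * φ (polarCoord.symm p)) = ∫⁻ p, φ p := by
  set B : ℝ × ℝ → ℝ × ℝ →L[ℝ] ℝ × ℝ := fun p =>
    LinearMap.toContinuousLinearMap (Matrix.toLin (Module.Basis.finTwoProd ℝ) (Module.Basis.finTwoProd ℝ)
      !![cos p.2, -p.1 * sin p.2; sin p.2, p.1 * cos p.2]) with hB
  have A : ∀ p ∈ polarCoord.target, HasFDerivWithinAt polarCoord.symm (B p) polarCoord.target p :=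
    fun p _ => (hasFDerivAt_polarCoord_symm p).hasFDerivWithinAt
  have B_det : ∀ p, (B p).det = p.1 := by
    intro p
    conv_rhs => rw [← one_mul p.1, ← cos_sq_add_sin_sq p.2]
    simp only [hB, neg_mul, LinearMap.det_toContinuousLinearMap, LinearMap.det_toLin,
      Matrix.det_fin_two_of, sub_neg_eq_add]
    ring
  have hinj : InjOn polarCoord.symm polarCoord.target := by
    have := polarCoord.symm.injOn
    rwa [OpenPartialHomeomorph.symm_source] at this
  symm
  calc ∫⁻ p, φ p = ∫⁻ p in polarCoord.source, φ p := by
        rw [← setLIntegral_univ]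
        exact setLIntegral_congr polarCoord_source_ae_eq_univ.symm
    _ = ∫⁻ p in polarCoord.symm '' polarCoord.target, φ p := by
        rw [polarCoord.symm_image_target_eq_source]
    _ = ∫⁻ p in polarCoord.target, ENNReal.ofReal |(B p).det| * φ (polarCoord.symm p) :=
        lintegral_image_eq_lintegral_abs_det_fderiv_mul volume
          polarCoord.open_target.measurableSet A hinj φ
    _ = ∫⁻ p in polarCoord.target, ENNReal.ofReal p.1 * φ (polarCoord.symm p) := by
        apply setLIntegral_congr_fun polarCoord.open_target.measurableSet
        intro p hp
        dsimp only
        rw [B_det, abs_of_pos hp.1]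

private lemma Complex.lintegral_polarCoord_symm (φ : ℂ → ENNReal) (hφ : Measurable φ) :
    (∫⁻ p in polarCoord.target, ENNReal.ofReal p.1 * φ (Complex.polarCoord.symm p)) = ∫⁻ z, φ z := by
  have hmp := Complex.volume_preserving_equiv_real_prod.symm
  rw [← hmp.lintegral_comp hφ]
  rw [← _root_.lintegral_polarCoord_symm (fun p => φ (Complex.measurableEquivRealProd.symm p))
    (hφ.comp Complex.measurableEquivRealProd.symm.measurable)]
  rfl

private lemma circleMap_continuous2 : Continuous (fun p : ℝ × ℝ => circleMap 0 p.1 p.2) := by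
  simp only [circleMap, zero_add]
  exact (Complex.continuous_ofReal.comp continuous_fst).mul
    (Complex.continuous_exp.comp ((Complex.continuous_ofReal.comp continuous_snd).mul
      continuous_const))

private lemma lintegral_ball_polar (φ : ℂ → ENNReal) (hφ : Measurable φ) :
    (∫⁻ z in ball (0:ℂ) 1, φ z)
      = ∫⁻ r in Ioo (0:ℝ) 1, ∫⁻ θ in Ioo (-π) π, ENNReal.ofReal r * φ (circleMap 0 r θ) := by
  have hsymm : ∀ p : ℝ × ℝ, Complex.polarCoord.symm p = circleMap 0 p.1 p.2 := by
    intro p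
    rw [Complex.polarCoord_symm_apply, circleMap, Complex.exp_mul_I]
    push_cast
    ring
  have hmb : MeasurableSet (ball (0:ℂ) 1) := measurableSet_ball
  have hsmb : MeasurableSet (Ioo (0:ℝ) 1 ×ˢ Ioo (-π) π) :=
    (measurableSet_Ioo.prod measurableSet_Ioo)
  have h1 : (∫⁻ z in ball (0:ℂ) 1, φ z) = ∫⁻ z, (ball (0:ℂ) 1).indicator φ z := by
    rw [lintegral_indicator hmb]
  rw [h1, ← Complex.lintegral_polarCoord_symm _ (hφ.indicator hmb)]
  have h2 : ∀ p ∈ polarCoord.target,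
      ENNReal.ofReal p.1 * (ball (0:ℂ) 1).indicator φ (Complex.polarCoord.symm p)
        = (Ioo (0:ℝ) 1 ×ˢ Ioo (-π) π).indicator
            (fun q => ENNReal.ofReal q.1 * φ (circleMap 0 q.1 q.2)) p := by
    intro p hp
    have hp1 : 0 < p.1 := hp.1
    have habs : ‖Complex.polarCoord.symm p‖ = p.1 := by
      rw [Complex.norm_polarCoord_symm, abs_of_pos hp1]
    by_cases hlt : p.1 < 1
    · have hmem : Complex.polarCoord.symm p ∈ ball (0:ℂ) 1 := by
        rw [mem_ball_zero_iff]
        rw [habs]; exact hlt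
      have hmem' : p ∈ Ioo (0:ℝ) 1 ×ˢ Ioo (-π) π := ⟨⟨hp1, hlt⟩, hp.2⟩
      rw [indicator_of_mem hmem, indicator_of_mem hmem', hsymm]
    · have hmem : Complex.polarCoord.symm p ∉ ball (0:ℂ) 1 := by
        rw [mem_ball_zero_iff]
        rw [habs]
        exact fun h => hlt h
      have hmem' : p ∉ Ioo (0:ℝ) 1 ×ˢ Ioo (-π) π := by
        intro h; exact hlt h.1.2
      rw [indicator_of_notMem hmem, indicator_of_notMem hmem', mul_zero]
  rw [setLIntegral_congr_fun polarCoord.open_target.measurableSet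
    h2]
  have hsub : (Ioo (0:ℝ) 1 ×ˢ Ioo (-π) π) ⊆ polarCoord.target := by
    rintro p ⟨h1', h2'⟩
    exact ⟨h1'.1, h2'⟩
  have h3 : (∫⁻ p in polarCoord.target,
      (Ioo (0:ℝ) 1 ×ˢ Ioo (-π) π).indicator
        (fun q => ENNReal.ofReal q.1 * φ (circleMap 0 q.1 q.2)) p)
      = ∫⁻ p in (Ioo (0:ℝ) 1 ×ˢ Ioo (-π) π),
          ENNReal.ofReal p.1 * φ (circleMap 0 p.1 p.2) := by
    rw [lintegral_indicator hsmb, Measure.restrict_restrict hsmb,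
      inter_eq_self_of_subset_left hsub]
  rw [h3]
  have hrestr : (volume : Measure (ℝ×ℝ)).restrict (Ioo (0:ℝ) 1 ×ˢ Ioo (-π) π)
      = ((volume.restrict (Ioo (0:ℝ) 1)).prod (volume.restrict (Ioo (-π) π))) := by
    rw [Measure.volume_eq_prod, Measure.prod_restrict]
  rw [hrestr]
  have hgmeas : Measurable (fun p : ℝ × ℝ => ENNReal.ofReal p.1 * φ (circleMap 0 p.1 p.2)) :=
    ((ENNReal.measurable_ofReal.comp measurable_fst)).mul
      (hφ.comp circleMap_continuous2.measurable)
  rw [lintegral_prod _ hgmeas.aemeasurable]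


private lemma exists_coeff_ne (F : ℂ → ℂ) (hF : DifferentiableOn ℂ F (ball (0:ℂ) 1))
    (hnc : ¬ ∃ c : ℂ, ∀ z ∈ ball (0:ℂ) 1, deriv F z = c)
    (p : FormalMultilinearSeries ℂ ℂ ℂ) (hp : HasFPowerSeriesAt (deriv F) p 0) :
    ∃ k : ℕ, k ≠ 0 ∧ p.coeff k ≠ 0 := by
  by_contra hcon
  push_neg at hcon
  apply hnc
  refine ⟨p.coeff 0, ?_⟩
  have hfa : AnalyticOnNhd ℂ (deriv F) (ball (0:ℂ) 1) :=
    (hF.analyticOnNhd isOpen_ball).deriv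
  have hev : deriv F =ᶠ[nhds (0:ℂ)] (fun _ => p.coeff 0) := by
    have h1 := hasFPowerSeriesAt_iff'.mp hp
    filter_upwards [h1] with z hz
    have hz' : HasSum (fun n => (z - 0)^n • p.coeff n) (deriv F z) := hz
    have h2 : HasSum (fun n => (z - 0)^n • p.coeff n) ((z - 0)^0 • p.coeff 0) := by
      apply hasSum_single 0
      intro n hn
      rw [hcon n hn, smul_zero]
    have := hz'.unique h2
    simpa using this
  have heq : EqOn (deriv F) (fun _ => p.coeff 0) (ball (0:ℂ) 1) :=
    hfa.eqOn_of_preconnected_of_eventuallyEq analyticOnNhd_const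
      (convex_ball (0:ℂ) 1).isPreconnected (mem_ball_self one_pos) hev
  intro z hz
  exact heq hz






private lemma setLIntegral_mono_on {α : Type*} [MeasurableSpace α] {μ : Measure α}
    {s : Set α} (hs : MeasurableSet s) {f g : α → ENNReal}
    (h : ∀ x ∈ s, f x ≤ g x) : ∫⁻ x in s, f x ∂μ ≤ ∫⁻ x in s, g x ∂μ := by
  rw [← lintegral_indicator hs, ← lintegral_indicator hs]
  apply lintegral_mono
  intro x
  by_cases hx : x ∈ s
  · simpa [indicator_of_mem hx] using h x hx
  · simp [indicator_of_notMem hx]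

/-- For `F` holomorphic on the unit disk with non-constant
derivative and `g` measurable with `0 < ∫_𝔻 g(|z|)² dA < ∞`, the strict
inequality `|F′(0)|² ∫_𝔻 g(|z|)² dA < ∫_𝔻 g(|z|)² |F′(z)|² dA` holds
(the right side may be `+∞`). -/
theorem derivative_at_center_strict_bound
    (F : ℂ → ℂ) (hF : DifferentiableOn ℂ F (ball (0:ℂ) 1))
    (hnc : ¬ ∃ c : ℂ, ∀ z ∈ ball (0:ℂ) 1, deriv F z = c)
    (g : ℝ → ℝ) (hg : Measurable g)
    (hpos : 0 < ∫⁻ z in ball (0:ℂ) 1, ENNReal.ofReal ((g (‖z‖))^2))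
    (hfin : (∫⁻ z in ball (0:ℂ) 1, ENNReal.ofReal ((g (‖z‖))^2)) < ⊤) :
    ENNReal.ofReal ((‖deriv F 0‖)^2) *
        (∫⁻ z in ball (0:ℂ) 1, ENNReal.ofReal ((g (‖z‖))^2))
      < ∫⁻ z in ball (0:ℂ) 1,
          ENNReal.ofReal ((g (‖z‖))^2 * (‖deriv F z‖)^2) := by
  classical
  have hfa : AnalyticOnNhd ℂ (deriv F) (ball (0:ℂ) 1) := (hF.analyticOnNhd isOpen_ball).deriv
  have hf : DifferentiableOn ℂ (deriv F) (ball (0:ℂ) 1) := hfa.differentiableOn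
  have hfc : ContinuousOn (deriv F) (ball (0:ℂ) 1) := hf.continuousOn
  obtain ⟨p, hp⟩ := hfa 0 (mem_ball_self one_pos)
  obtain ⟨k, hk0, hk⟩ := exists_coeff_ne F hF hnc p hp
  set A : ℝ := ‖deriv F 0‖^2 with hA
  set K : ℝ := ‖p.coeff k‖^2 with hKdef
  have hKpos : 0 < K := pow_pos (norm_pos_iff.mpr hk) 2
  have hApos : 0 ≤ A := sq_nonneg _
  have hfm : Measurable (deriv F) := measurable_deriv F
  have hgabs : Measurable (fun z : ℂ => (g (‖z‖))^2) :=
    (hg.comp continuous_norm.measurable).pow_const 2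
  have hφH : Measurable (fun z : ℂ => ENNReal.ofReal ((g (‖z‖))^2)) :=
    ENNReal.measurable_ofReal.comp hgabs
  have hφG : Measurable (fun z : ℂ =>
      ENNReal.ofReal ((g (‖z‖))^2 * (‖deriv F z‖)^2)) :=
    ENNReal.measurable_ofReal.comp
      (hgabs.mul ((continuous_norm.measurable.comp hfm).pow_const 2))
  -- weight
  set W : ℝ → ENNReal := fun r =>
    ENNReal.ofReal r * ENNReal.ofReal ((g r)^2) * ENNReal.ofReal (2*π) with hWdef
  have hWmeas : Measurable W :=
    ((ENNReal.measurable_ofReal.comp measurable_id').mul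
      (ENNReal.measurable_ofReal.comp (hg.pow_const 2))).mul measurable_const
  have hIooMeas : MeasurableSet (Ioo (0:ℝ) 1) := measurableSet_Ioo
  have hvolIoo : (volume (Ioo (-π) π)) = ENNReal.ofReal (2*π) := by
    rw [Real.volume_Ioo]
    congr 1
    ring
  -- H in polar coordinates
  have HH : (∫⁻ z in ball (0:ℂ) 1, ENNReal.ofReal ((g (‖z‖))^2))
      = ∫⁻ r in Ioo (0:ℝ) 1, W r := by
    rw [lintegral_ball_polar _ hφH]
    apply setLIntegral_congr_fun hIooMeas
    intro r hr
    have habs : ∀ θ : ℝ, ‖circleMap 0 r θ‖ = r := by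
      intro θ; rw [norm_circleMap_zero, abs_of_pos hr.1]
    calc (∫⁻ θ in Ioo (-π) π, ENNReal.ofReal r
            * ENNReal.ofReal ((g (‖circleMap 0 r θ‖))^2))
        = ∫⁻ _θ in Ioo (-π) π, ENNReal.ofReal r * ENNReal.ofReal ((g r)^2) := by
          apply setLIntegral_congr_fun measurableSet_Ioo
          intro θ _
          dsimp only
          rw [habs θ]
      _ = ENNReal.ofReal r * ENNReal.ofReal ((g r)^2) * volume (Ioo (-π) π) := by
          rw [setLIntegral_const]
      _ = W r := by rw [hvolIoo]
  -- G in polar coordinates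
  set J : ℝ → ENNReal := fun r =>
    ∫⁻ θ in Ioo (-π) π, ENNReal.ofReal ((‖deriv F (circleMap 0 r θ)‖)^2) with hJdef
  have HG : (∫⁻ z in ball (0:ℂ) 1,
        ENNReal.ofReal ((g (‖z‖))^2 * (‖deriv F z‖)^2))
      = ∫⁻ r in Ioo (0:ℝ) 1,
          (ENNReal.ofReal r * ENNReal.ofReal ((g r)^2)) * J r := by
    rw [lintegral_ball_polar _ hφG]
    apply setLIntegral_congr_fun hIooMeas
    intro r hr
    have habs : ∀ θ : ℝ, ‖circleMap 0 r θ‖ = r := by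
      intro θ; rw [norm_circleMap_zero, abs_of_pos hr.1]
    have hmeasθ : Measurable (fun θ : ℝ =>
        ENNReal.ofReal ((‖deriv F (circleMap 0 r θ)‖)^2)) :=
      ENNReal.measurable_ofReal.comp
        ((continuous_norm.measurable.comp
          (hfm.comp (continuous_circleMap 0 r).measurable)).pow_const 2)
    calc (∫⁻ θ in Ioo (-π) π, ENNReal.ofReal r
            * ENNReal.ofReal ((g (‖circleMap 0 r θ‖))^2
                * (‖deriv F (circleMap 0 r θ)‖)^2))
        = ∫⁻ θ in Ioo (-π) π, (ENNReal.ofReal r * ENNReal.ofReal ((g r)^2))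
            * ENNReal.ofReal ((‖deriv F (circleMap 0 r θ)‖)^2) := by
          apply setLIntegral_congr_fun measurableSet_Ioo
          intro θ _
          dsimp only
          rw [habs θ, ENNReal.ofReal_mul (sq_nonneg _), mul_assoc]
      _ = (ENNReal.ofReal r * ENNReal.ofReal ((g r)^2)) * J r := by
          rw [hJdef, lintegral_const_mul _ hmeasθ]
  -- per-radius lower bound
  have per_r : ∀ r ∈ Ioo (0:ℝ) 1,
      ENNReal.ofReal (2*π*(A + K * r^(2*k))) ≤ J r := by
    intro r hr
    obtain ⟨hr0, hr1⟩ := hr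
    set u : ℝ → ℂ := fun θ => deriv F (circleMap 0 r θ) with hudef
    have humaps : ∀ θ : ℝ, circleMap 0 r θ ∈ ball (0:ℂ) 1 := by
      intro θ
      rw [mem_ball_zero_iff, norm_circleMap_zero, abs_of_pos hr0]
      exact hr1
    have hu : Continuous u :=
      hfc.comp_continuous (continuous_circleMap 0 r) humaps
    have h₀ : (∫ θ in (-π:ℝ)..π, u θ) = (2*π) * (deriv F 0) := by
      have h := coeff_integral (deriv F) hf hr0 hr1 0 p hp
      simp only [Nat.cast_zero, neg_zero, zero_mul, Complex.exp_zero, one_mul, pow_zero,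
        mul_one] at h
      have hc0 : p.coeff 0 = deriv F 0 := hp.coeff_zero 1
      rw [hudef, h, hc0]
    have hckEq : (∫ θ in (-π:ℝ)..π, Complex.exp (-(k:ℂ) * θ * Complex.I) * u θ)
        = (2*π) * (p.coeff k * (r:ℂ)^k) :=
      coeff_integral (deriv F) hf hr0 hr1 k p hp
    have hbessel := bessel_two u hu k hk0 (deriv F 0) (p.coeff k * (r:ℂ)^k) h₀ hckEq
    have habs2 : ‖p.coeff k * (r:ℂ)^k‖^2 = K * r^(2*k) := by
      rw [norm_mul, norm_pow, Complex.norm_real, Real.norm_eq_abs, abs_of_pos hr0, mul_pow, ← pow_mul,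
        mul_comm k 2]
    rw [habs2] at hbessel
    -- convert to lintegral
    have hle : -π ≤ π := by linarith [Real.pi_pos]
    have hcont2 : Continuous (fun θ => ‖u θ‖^2) :=
      (continuous_norm.comp hu).pow 2
    have hint : IntegrableOn (fun θ => ‖u θ‖^2) (Ioc (-π) π) volume :=
      hcont2.integrableOn_Ioc
    have hJeq : J r = ENNReal.ofReal (∫ θ in (-π:ℝ)..π, ‖u θ‖^2) := by
      rw [hJdef]
      rw [intervalIntegral.integral_of_le hle]
      rw [MeasureTheory.ofReal_integral_eq_lintegral_ofReal hint
        (Filter.Eventually.of_forall (fun θ => sq_nonneg _))]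
      rw [Measure.restrict_congr_set Ioo_ae_eq_Ioc]
    rw [hJeq]
    exact ENNReal.ofReal_le_ofReal hbessel
  -- combine
  have key : ENNReal.ofReal A * (∫⁻ r in Ioo (0:ℝ) 1, W r)
        + (∫⁻ r in Ioo (0:ℝ) 1, W r * ENNReal.ofReal (K * r^(2*k)))
      ≤ ∫⁻ r in Ioo (0:ℝ) 1, (ENNReal.ofReal r * ENNReal.ofReal ((g r)^2)) * J r := by
    have step1 : ∀ r ∈ Ioo (0:ℝ) 1,
        ENNReal.ofReal A * W r + W r * ENNReal.ofReal (K * r^(2*k))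
          ≤ (ENNReal.ofReal r * ENNReal.ofReal ((g r)^2)) * J r := by
      intro r hr
      have h1 : ENNReal.ofReal A * W r + W r * ENNReal.ofReal (K * r^(2*k))
          = (ENNReal.ofReal r * ENNReal.ofReal ((g r)^2))
              * ENNReal.ofReal (2*π*(A + K * r^(2*k))) := by
        rw [hWdef]
        have hKr : (0:ℝ) ≤ K * r^(2*k) := mul_nonneg hKpos.le (pow_nonneg hr.1.le _)
        rw [show (2*π*(A + K * r^(2*k))) = (2*π) * (A + K * r^(2*k)) by ring,
          ENNReal.ofReal_mul (by linarith [Real.pi_pos] : (0:ℝ) ≤ 2*π), ENNReal.ofReal_add hApos hKr]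
        ring
      rw [h1]
      exact mul_le_mul_right (per_r r hr) _
    calc ENNReal.ofReal A * (∫⁻ r in Ioo (0:ℝ) 1, W r)
          + (∫⁻ r in Ioo (0:ℝ) 1, W r * ENNReal.ofReal (K * r^(2*k)))
        = ∫⁻ r in Ioo (0:ℝ) 1,
            (ENNReal.ofReal A * W r + W r * ENNReal.ofReal (K * r^(2*k))) := by
          rw [lintegral_add_left (hWmeas.const_mul _), lintegral_const_mul _ hWmeas]
      _ ≤ _ := setLIntegral_mono_on hIooMeas step1
  -- positivity of the extra term
  have hBpos : 0 < ∫⁻ r in Ioo (0:ℝ) 1, W r * ENNReal.ofReal (K * r^(2*k)) := by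
    have hWpos : 0 < ∫⁻ r in Ioo (0:ℝ) 1, W r := by
      rw [← HH]; exact hpos
    have hmeas2 : Measurable (fun r => W r * ENNReal.ofReal (K * r^(2*k))) :=
      hWmeas.mul (ENNReal.measurable_ofReal.comp ((measurable_id'.pow_const (2*k)).const_mul K))
    rw [lintegral_pos_iff_support hWmeas] at hWpos
    rw [lintegral_pos_iff_support hmeas2]
    apply lt_of_lt_of_le hWpos
    apply measure_mono
    intro r hrs
    simp only [Function.mem_support] at hrs ⊢
    have hr0 : 0 < r := by
      by_contra hle
      push_neg at hle
      apply hrs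
      rw [hWdef]
      simp [ENNReal.ofReal_eq_zero.mpr hle]
    intro hcon
    rcases mul_eq_zero.mp hcon with h | h
    · exact hrs h
    · rw [ENNReal.ofReal_eq_zero] at h
      nlinarith [pow_pos hr0 (2*k), hKpos]
  -- conclusion
  have hfinW : (∫⁻ r in Ioo (0:ℝ) 1, W r) ≠ ⊤ := by rw [← HH]; exact hfin.ne
  have hfin' : ENNReal.ofReal A * (∫⁻ r in Ioo (0:ℝ) 1, W r) ≠ ⊤ :=
    ENNReal.mul_ne_top ENNReal.ofReal_ne_top hfinW
  rw [HH, HG]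
  calc ENNReal.ofReal A * (∫⁻ r in Ioo (0:ℝ) 1, W r)
      < ENNReal.ofReal A * (∫⁻ r in Ioo (0:ℝ) 1, W r)
          + (∫⁻ r in Ioo (0:ℝ) 1, W r * ENNReal.ofReal (K * r^(2*k))) :=
        ENNReal.lt_add_right hfin' hBpos.ne'
    _ ≤ _ := key

end Aux
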